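/- arXiv:2605.11911 — 9 statements merged into one kernel-verified Lean document; each statement's English description precedes it below -/
import Mathlib

section
/- If each weight matrix W_l(t) evolves under the backpropagation gradient flow dW_l/dt = W_{L:l+1}ᵀ r x̂_{l−1}ᵀ (all quantities evaluated from the weights at time t), then the prediction ŷ(t) = W_{L:1}(t) x is differentiable in t and satisfies dŷ/dt = ∑_{l=1}^{L} W_{L:l+1} W_{L:l+1}ᵀ r (x̂_{l−1}ᵀ x̂_{l−1}). -/
open Matrix

lemma vecMulVec_mulVec' {m k : ℕ} (u : Fin m → ℝ) (v w : Fin k → ℝ) :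
    vecMulVec u v *ᵥ w = (v ⬝ᵥ w) • u := by
  funext i
  simp only [mulVec, dotProduct, vecMulVec_apply, Pi.smul_apply, smul_eq_mul,
    Finset.sum_mul]
  exact Finset.sum_congr rfl fun j _ => by ring

lemma sum_mulVec' {ι : Type*} {a b : ℕ} (s : Finset ι)
    (f : ι → Matrix (Fin a) (Fin b) ℝ) (v : Fin b → ℝ) :
    (∑ i ∈ s, f i) *ᵥ v = ∑ i ∈ s, f i *ᵥ v := by
  induction s using Finset.cons_induction with
  | empty => simp [Matrix.zero_mulVec]
  | cons i s hi ih => simp [Finset.sum_cons, Matrix.add_mulVec, ih]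

/-- If each weight matrix `W_l(t)` evolves under the backpropagation
gradient flow `dW_l/dt = W_{L:l+1}ᵀ r x̂_{l−1}ᵀ`, then the prediction
`ŷ(t) = W_{L:1}(t) x` is differentiable in `t` and
`dŷ/dt = ∑_{l=1}^{L} W_{L:l+1} W_{L:l+1}ᵀ r (x̂_{l−1}ᵀ x̂_{l−1})`.
Here `P l t = W_{L:l+1}(t)` and `Q l t = W_{l:1}(t)` are the partial products. -/
theorem stmt2
    (L : ℕ) (hL : 1 ≤ L) (n : ℕ → ℕ)
    (W : ∀ k : ℕ, ℝ → Matrix (Fin (n k)) (Fin (n (k - 1))) ℝ)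
    (P : ∀ k : ℕ, ℝ → Matrix (Fin (n L)) (Fin (n k)) ℝ)
    (hPL : ∀ t : ℝ, P L t = 1)
    (hP : ∀ t : ℝ, ∀ k : ℕ, k < L → P k t = P (k + 1) t * W (k + 1) t)
    (Q : ∀ k : ℕ, ℝ → Matrix (Fin (n k)) (Fin (n 0)) ℝ)
    (hQ0 : ∀ t : ℝ, Q 0 t = 1)
    (hQ : ∀ t : ℝ, ∀ k : ℕ, 1 ≤ k → k ≤ L → Q k t = W k t * Q (k - 1) t)
    (x : Fin (n 0) → ℝ) (y : Fin (n L) → ℝ) (t₀ : ℝ)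
    (hW : ∀ l : ℕ, 1 ≤ l → l ≤ L → ∀ i j, HasDerivAt (fun t => W l t i j)
      (((P l t₀)ᵀ * vecMulVec (y - P 0 t₀ *ᵥ x) (Q (l - 1) t₀ *ᵥ x)) i j) t₀) :
    HasDerivAt (fun t => P 0 t *ᵥ x)
      (∑ l ∈ Finset.Icc 1 L, ((Q (l - 1) t₀ *ᵥ x) ⬝ᵥ (Q (l - 1) t₀ *ᵥ x)) •
        ((P l t₀ * (P l t₀)ᵀ) *ᵥ (y - P 0 t₀ *ᵥ x))) t₀ := by
  set r := y - P 0 t₀ *ᵥ x with hr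
  set D : ∀ l : ℕ, Matrix (Fin (n l)) (Fin (n (l - 1))) ℝ :=
    fun l => (P l t₀)ᵀ * vecMulVec r (Q (l - 1) t₀ *ᵥ x) with hD
  -- main induction (downward from L: d = L - k)
  have key : ∀ d k : ℕ, k + d = L →
      ∃ G : Matrix (Fin (n L)) (Fin (n k)) ℝ,
        (∀ i j, HasDerivAt (fun t => P k t i j) (G i j) t₀) ∧
        G * Q k t₀ = ∑ l ∈ Finset.Icc (k + 1) L, P l t₀ * D l * Q (l - 1) t₀ := by
    intro d
    induction d with
    | zero =>
      intro k hk
      have : k = L := by omega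
      subst this
      refine ⟨0, ?_, ?_⟩
      · intro i j
        have : (fun t => P k t i j) = fun _ => (1 : Matrix (Fin (n k)) (Fin (n k)) ℝ) i j := by
          funext t; rw [hPL]
        rw [this]
        exact hasDerivAt_const t₀ _
      · rw [Matrix.zero_mul, Finset.Icc_eq_empty (by omega)]
        simp
    | succ d ih =>
      intro k hk
      obtain ⟨G, hGderiv, hGQ⟩ := ih (k + 1) (by omega)
      have hkL : k < L := by omega
      have h1k : 1 ≤ k + 1 := by omega
      have hkL' : k + 1 ≤ L := by omega
      refine ⟨G * W (k + 1) t₀ + P (k + 1) t₀ * D (k + 1), ?_, ?_⟩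
      · intro i j
        have heq : (fun t => P k t i j)
            = fun t => ∑ m, P (k + 1) t i m * W (k + 1) t m j := by
          funext t; rw [hP t k hkL]; rfl
        rw [heq]
        have hder : HasDerivAt (fun t => ∑ m, P (k + 1) t i m * W (k + 1) t m j)
            (∑ m, (G i m * W (k + 1) t₀ m j
              + P (k + 1) t₀ i m * D (k + 1) m j)) t₀ := by
          apply HasDerivAt.fun_sum
          intro m _
          exact (hGderiv i m).mul (by have := hW (k + 1) h1k hkL' m j; exact this)
        convert hder using 1
        simp [Matrix.add_apply, Matrix.mul_apply, Finset.sum_add_distrib]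
      · have hQk := hQ t₀ (k + 1) h1k hkL'
        rw [Matrix.add_mul, Matrix.mul_assoc, Matrix.mul_assoc]
        show G * (W (k + 1) t₀ * Q (k + 1 - 1) t₀)
            + P (k + 1) t₀ * (D (k + 1) * Q (k + 1 - 1) t₀)
            = ∑ l ∈ Finset.Icc (k + 1) L, P l t₀ * D l * Q (l - 1) t₀
        rw [← hQk, hGQ]
        have hsplit : Finset.Icc (k + 1) L = insert (k + 1) (Finset.Icc (k + 2) L) := by
          ext a; simp only [Finset.mem_Icc, Finset.mem_insert]; omega
        rw [hsplit, Finset.sum_insert (by simp [Finset.mem_Icc]), ← Matrix.mul_assoc]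
        abel
  obtain ⟨G, hGderiv, hGQ⟩ := key L 0 (by omega)
  rw [hQ0, Matrix.mul_one, Nat.zero_add] at hGQ
  have hderiv : HasDerivAt (fun t => P 0 t *ᵥ x) (G *ᵥ x) t₀ := by
    rw [hasDerivAt_pi]
    intro i
    have heq : (fun t => (P 0 t *ᵥ x) i) = fun t => ∑ j, P 0 t i j * x j := by
      funext t; rfl
    rw [heq]
    have : HasDerivAt (fun t => ∑ j, P 0 t i j * x j) (∑ j, G i j * x j) t₀ := by
      apply HasDerivAt.fun_sum
      intro j _
      exact (hGderiv i j).mul_const (x j)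
    exact this
  convert hderiv using 1
  rw [hGQ, sum_mulVec']
  apply Finset.sum_congr rfl
  intro l hl
  show _ = (P l t₀ * D l * Q (l - 1) t₀) *ᵥ x
  simp only [hD]
  conv_rhs => rw [← Matrix.mulVec_mulVec, ← Matrix.mulVec_mulVec, ← Matrix.mulVec_mulVec,
    vecMulVec_mulVec', Matrix.mulVec_smul, Matrix.mulVec_smul, Matrix.mulVec_mulVec]
end

section
/- For each hidden layer 1 ≤ l ≤ L−1, the gradient of the PC energy E with respect to the activity x_l equals ε_l − W_{l+1}ᵀ ε_{l+1}. Consequently, if the activities are at inference equilibrium, then the prediction errors satisfy ε_l = W_{L:l+1}ᵀ ε_L for every l = 1, …, L. -/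
open Matrix

noncomputable def dotCLM {m : Type*} [Fintype m] [DecidableEq m] (c : m → ℝ) :
    (m → ℝ) →L[ℝ] ℝ :=
  ∑ i, c i • (ContinuousLinearMap.proj (R := ℝ) (φ := fun _ : m => ℝ) i)

lemma dotCLM_apply {m : Type*} [Fintype m] [DecidableEq m] (c h : m → ℝ) :
    dotCLM c h = c ⬝ᵥ h := by
  simp [dotCLM, dotProduct]

lemma lemA {m : Type*} [Fintype m] [DecidableEq m] (p : m → ℝ) :
    HasFDerivAt (fun u : m → ℝ => (1/2:ℝ) * (u ⬝ᵥ u)) (dotCLM p) p := by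
  have hi : ∀ i : m, HasFDerivAt (fun u : m → ℝ => u i * u i)
      (p i • (ContinuousLinearMap.proj (R := ℝ) (φ := fun _ : m => ℝ) i)
        + p i • (ContinuousLinearMap.proj (R := ℝ) (φ := fun _ : m => ℝ) i)) p := by
    intro i
    exact (ContinuousLinearMap.proj (R := ℝ) (φ := fun _ : m => ℝ) i).hasFDerivAt.mul
      (ContinuousLinearMap.proj (R := ℝ) (φ := fun _ : m => ℝ) i).hasFDerivAt
  have hsum := (HasFDerivAt.fun_sum (fun i (_ : i ∈ Finset.univ) => hi i)).const_mul (1/2 : ℝ)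
  have hfe : (fun u : m → ℝ => (1/2:ℝ) * ∑ i, u i * u i)
      = fun u : m → ℝ => (1/2:ℝ) * (u ⬝ᵥ u) := by
    funext u; simp [dotProduct]
  rw [hfe] at hsum
  refine hsum.congr_fderiv (Eq.symm ?_)
  ext h
  simp [dotCLM, ContinuousLinearMap.sum_apply, Finset.mul_sum]
  ring_nf

lemma lemB {m : Type*} [Fintype m] [DecidableEq m] (c p : m → ℝ) :
    HasFDerivAt (fun v : m → ℝ => (1/2:ℝ) * ((v - c) ⬝ᵥ (v - c))) (dotCLM (p - c)) p := by
  have hv : HasFDerivAt (fun v : m → ℝ => v - c)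
      (ContinuousLinearMap.id ℝ (m → ℝ)) p :=
    (hasFDerivAt_id p).sub_const c
  have hc := (lemA (p - c)).comp p hv
  exact hc

lemma lemC {m q : Type*} [Fintype m] [DecidableEq m] [Fintype q] [DecidableEq q]
    (d : q → ℝ) (M : Matrix q m ℝ) (p : m → ℝ) :
    HasFDerivAt (fun v : m → ℝ => (1/2:ℝ) * ((d - M *ᵥ v) ⬝ᵥ (d - M *ᵥ v)))
      (dotCLM (-(Mᵀ *ᵥ (d - M *ᵥ p)))) p := by
  have hT : HasFDerivAt (fun v : m → ℝ => d - M *ᵥ v)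
      (-(LinearMap.toContinuousLinearMap (Matrix.mulVecLin M))) p := by
    have h1 : HasFDerivAt (fun v : m → ℝ => M *ᵥ v)
        (LinearMap.toContinuousLinearMap (Matrix.mulVecLin M)) p :=
      (LinearMap.toContinuousLinearMap (Matrix.mulVecLin M)).hasFDerivAt
    simpa using (hasFDerivAt_const d p).sub h1
  have hcomp := (lemA (d - M *ᵥ p)).comp p hT
  refine hcomp.congr_fderiv ?_
  ext h
  simp [dotCLM, dotProduct, Matrix.mulVec, Finset.mul_sum, Finset.sum_mul, mul_comm,
    mul_left_comm]
  rw [Finset.sum_comm]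
  exact Finset.sum_congr rfl fun _ _ => Finset.sum_congr rfl fun _ _ => by ring


/-- For each hidden layer `1 ≤ l ≤ L−1`, the gradient of the PC
energy `E = ∑_{k=1}^L (1/2)‖x_k − W_k x_{k−1}‖²` with respect to the activity `x_l`
equals `ε_l − W_{l+1}ᵀ ε_{l+1}` (where `ε_k = x_k − W_k x_{k−1}`).  Consequently, if
the activities are at inference equilibrium (all these gradients vanish), then
`ε_l = W_{L:l+1}ᵀ ε_L` for every `l = 1, …, L`.  Here `a` is the family of
activities (with `a 0 = x` clamped to the input and `a L = y` to the target) and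
`P l = W_{L:l+1}` are the partial products. -/
theorem stmt3
    (L : ℕ) (hL : 1 ≤ L) (n : ℕ → ℕ)
    (W : ∀ k : ℕ, Matrix (Fin (n k)) (Fin (n (k - 1))) ℝ)
    (P : ∀ k : ℕ, Matrix (Fin (n L)) (Fin (n k)) ℝ)
    (hPL : P L = 1)
    (hP : ∀ k : ℕ, k < L → P k = P (k + 1) * W (k + 1))
    (x : Fin (n 0) → ℝ) (y : Fin (n L) → ℝ)
    (a : ∀ k : ℕ, Fin (n k) → ℝ) (ha0 : a 0 = x) (haL : a L = y) :
    -- (i) the gradient of `E` with respect to the hidden activity `x_l` is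
    --     `ε_l − W_{l+1}ᵀ ε_{l+1}`:
    (∀ l : ℕ, 1 ≤ l → l ≤ L - 1 →
      ∀ φ : (Fin (n l) → ℝ) →L[ℝ] ℝ,
        (∀ h : Fin (n l) → ℝ, φ h =
          ((a l - W l *ᵥ a (l - 1)) - ((W (l + 1))ᵀ *ᵥ (a (l + 1) - W (l + 1) *ᵥ a l) : Fin (n l) → ℝ)) ⬝ᵥ h) →
        HasFDerivAt
          (fun v : Fin (n l) → ℝ =>
            ∑ k ∈ Finset.Icc 1 L, (1 / 2 : ℝ) *
              ((Function.update a l v k - W k *ᵥ Function.update a l v (k - 1)) ⬝ᵥ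
               (Function.update a l v k - W k *ᵥ Function.update a l v (k - 1))))
          φ (a l)) ∧
    -- (ii) at inference equilibrium, `ε_l = W_{L:l+1}ᵀ ε_L` for all `l = 1, …, L`:
    ((∀ l : ℕ, 1 ≤ l → l ≤ L - 1 →
        a l - W l *ᵥ a (l - 1) = ((W (l + 1))ᵀ *ᵥ (a (l + 1) - W (l + 1) *ᵥ a l) : Fin (n l) → ℝ)) →
      ∀ l : ℕ, 1 ≤ l → l ≤ L →
        a l - W l *ᵥ a (l - 1) = (P l)ᵀ *ᵥ (a L - W L *ᵥ a (L - 1))) := by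
  constructor
  · intro l hl1 hlL φ hφ
    have hl1L : l + 1 ≤ L := by omega
    set εl : Fin (n l) → ℝ := a l - W l *ᵥ a (l - 1) with hεl
    set εl1 : Fin (n (l + 1)) → ℝ := a (l + 1) - W (l + 1) *ᵥ a l with hεl1
    classical
    set D : ∀ k : ℕ, (Fin (n l) → ℝ) →L[ℝ] ℝ := fun k =>
      if k = l then dotCLM εl
      else if k = l + 1 then dotCLM (-((W (l + 1))ᵀ *ᵥ εl1)) else 0 with hD
    have hterm : ∀ k ∈ Finset.Icc 1 L,
        HasFDerivAt
          (fun v : Fin (n l) → ℝ => (1 / 2 : ℝ) *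
            ((Function.update a l v k - W k *ᵥ Function.update a l v (k - 1)) ⬝ᵥ
             (Function.update a l v k - W k *ᵥ Function.update a l v (k - 1))))
          (D k) (a l) := by
      intro k hk
      simp only [Finset.mem_Icc] at hk
      by_cases hkl : k = l
      · subst hkl
        have hfe : (fun v : Fin (n k) → ℝ => (1 / 2 : ℝ) *
            ((Function.update a k v k - W k *ᵥ Function.update a k v (k - 1)) ⬝ᵥ
             (Function.update a k v k - W k *ᵥ Function.update a k v (k - 1))))
            = fun v : Fin (n k) → ℝ => (1 / 2 : ℝ) *
              ((v - W k *ᵥ a (k - 1)) ⬝ᵥ (v - W k *ᵥ a (k - 1))) := by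
          funext v
          rw [Function.update_self, Function.update_of_ne (by omega)]
        rw [hfe]
        have := lemB (W k *ᵥ a (k - 1)) (a k)
        simpa [hD, hεl] using this
      · by_cases hkl1 : k = l + 1
        · subst hkl1
          have hfe : (fun v : Fin (n l) → ℝ => (1 / 2 : ℝ) *
              ((Function.update a l v (l + 1) - W (l + 1) *ᵥ Function.update a l v (l + 1 - 1)) ⬝ᵥ
               (Function.update a l v (l + 1) - W (l + 1) *ᵥ Function.update a l v (l + 1 - 1))))
              = fun v : Fin (n l) → ℝ => (1 / 2 : ℝ) *
                ((a (l + 1) - W (l + 1) *ᵥ v) ⬝ᵥ (a (l + 1) - W (l + 1) *ᵥ v)) := by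
            funext v
            rw [Function.update_of_ne (by omega)]
            have h2 : Function.update a l v (l + 1 - 1) = v :=
              Function.update_self l v a
            rw [h2]
          rw [hfe]
          have := lemC (a (l + 1)) (W (l + 1)) (a l)
          simpa [hD, hεl1] using this
        · have hfe : (fun v : Fin (n l) → ℝ => (1 / 2 : ℝ) *
              ((Function.update a l v k - W k *ᵥ Function.update a l v (k - 1)) ⬝ᵥ
               (Function.update a l v k - W k *ᵥ Function.update a l v (k - 1))))
              = fun _ : Fin (n l) → ℝ => (1 / 2 : ℝ) *
                ((a k - W k *ᵥ a (k - 1)) ⬝ᵥ (a k - W k *ᵥ a (k - 1))) := by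
            funext v
            rw [Function.update_of_ne hkl, Function.update_of_ne (by omega)]
          rw [hfe]
          simpa [hD, hkl, hkl1] using hasFDerivAt_const
            ((1 / 2 : ℝ) * ((a k - W k *ᵥ a (k - 1)) ⬝ᵥ (a k - W k *ᵥ a (k - 1)))) (a l)
    have hsum := HasFDerivAt.fun_sum hterm
    have hφeq : φ = ∑ k ∈ Finset.Icc 1 L, D k := by
      ext h
      rw [hφ h]
      have hsub : ({l, l + 1} : Finset ℕ) ⊆ Finset.Icc 1 L := by
        intro k hk
        simp only [Finset.mem_insert, Finset.mem_singleton] at hk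
        simp only [Finset.mem_Icc]
        omega
      rw [ContinuousLinearMap.sum_apply,
        ← Finset.sum_subset hsub (fun k _ hk2 => by
          simp only [Finset.mem_insert, Finset.mem_singleton, not_or] at hk2
          simp [hD, hk2.1, hk2.2]),
        Finset.sum_pair (by omega : l ≠ l + 1)]
      simp [hD, dotCLM_apply, sub_dotProduct, neg_dotProduct]
      ring
    rw [hφeq]
    exact hsum
  · intro heq
    have key : ∀ d l' : ℕ, l' + d = L → 1 ≤ l' →
        a l' - W l' *ᵥ a (l' - 1) = (P l')ᵀ *ᵥ (a L - W L *ᵥ a (L - 1)) := by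
      intro d
      induction d with
      | zero =>
        intro l' h hl'
        have hE : l' = L := by omega
        subst hE
        rw [hPL]
        simp
      | succ d ih =>
        intro l' h hl'
        have hlt : l' < L := by omega
        have h1 := heq l' hl' (by omega)
        have h2 : a (l' + 1) - W (l' + 1) *ᵥ a l'
            = (P (l' + 1))ᵀ *ᵥ (a L - W L *ᵥ a (L - 1)) :=
          ih (l' + 1) (by omega) (by omega)
        rw [h1, h2, hP l' hlt, Matrix.transpose_mul, ← Matrix.mulVec_mulVec]
    intro l hl1 hlL
    exact key (L - l) l (by omega) hl1
end

section
/- Let activities x_0* = x, x_1*, …, x_{L−1}*, x_L* = y of a deep linear network be at inference equilibrium, so that ε_l* = W_{L:l+1}ᵀ ε_L* and ε_L* = S⁻¹ r, where ε_l* = x_l* − W_l x_{l−1}* and r = y − W_{L:1} x. Then for each layer l = 1, …, L, the negative gradient of the PC energy E with respect to W_l (with the activities held fixed at their equilibrium values, under the Frobenius inner product) equals ε_l* x_{l−1}*ᵀ = W_{L:l+1}ᵀ S⁻¹ r x_{l−1}*ᵀ. -/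
open Matrix

/-- Let activities `x*_0 = x, …, x*_L = y` of a deep linear network
be at inference equilibrium, so that `ε*_l = W_{L:l+1}ᵀ ε*_L` and `ε*_L = S⁻¹ r`,
with `ε*_l = x*_l − W_l x*_{l−1}` and `r = y − W_{L:1} x`.  Then for each layer
`l = 1, …, L` the negative gradient of the PC energy `E` with respect to `W_l`
(activities held fixed at equilibrium, Frobenius inner product) equals
`ε*_l x*_{l−1}ᵀ = W_{L:l+1}ᵀ S⁻¹ r x*_{l−1}ᵀ`.
Here `a` is the family of equilibrium activities and `P l = W_{L:l+1}`. -/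
theorem stmt6
    (L : ℕ) (hL : 1 ≤ L) (n : ℕ → ℕ)
    (W : ∀ k : ℕ, Matrix (Fin (n k)) (Fin (n (k - 1))) ℝ)
    (P : ∀ k : ℕ, Matrix (Fin (n L)) (Fin (n k)) ℝ)
    (hPL : P L = 1)
    (hP : ∀ k : ℕ, k < L → P k = P (k + 1) * W (k + 1))
    (x : Fin (n 0) → ℝ) (y : Fin (n L) → ℝ)
    (a : ∀ k : ℕ, Fin (n k) → ℝ) (ha0 : a 0 = x) (haL : a L = y)
    (heq : ∀ l : ℕ, 1 ≤ l → l ≤ L →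
      a l - W l *ᵥ a (l - 1) = (P l)ᵀ *ᵥ (a L - W L *ᵥ a (L - 1)))
    (heqL : a L - W L *ᵥ a (L - 1) =
      (∑ k ∈ Finset.Icc 1 L, P k * (P k)ᵀ)⁻¹ *ᵥ (y - P 0 *ᵥ x))
    (l : ℕ) (hl1 : 1 ≤ l) (hlL : l ≤ L)
    (φ : (Fin (n l) → Fin (n (l - 1)) → ℝ) →L[ℝ] ℝ)
    (hφ : ∀ H : Fin (n l) → Fin (n (l - 1)) → ℝ,
      φ H = ∑ i, ∑ j,
        (-(vecMulVec (a l - W l *ᵥ a (l - 1)) (a (l - 1)))) i j * H i j) :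
    -- the Fréchet derivative of the PC energy in `W_l` is represented (under the
    -- Frobenius inner product) by `−ε*_l x*_{l−1}ᵀ`, i.e. the negative gradient is
    -- `ε*_l x*_{l−1}ᵀ` …
    HasFDerivAt
      (fun M : Fin (n l) → Fin (n (l - 1)) → ℝ =>
        ∑ k ∈ Finset.Icc 1 L, (1 / 2 : ℝ) *
          ((a k - (Function.update W l (Matrix.of M) k) *ᵥ a (k - 1)) ⬝ᵥ
           (a k - (Function.update W l (Matrix.of M) k) *ᵥ a (k - 1))))
      φ (fun i j => W l i j) ∧
    -- … and this matrix equals `W_{L:l+1}ᵀ S⁻¹ r x*_{l−1}ᵀ`: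
    vecMulVec (a l - W l *ᵥ a (l - 1)) (a (l - 1)) =
      (P l)ᵀ * ((∑ k ∈ Finset.Icc 1 L, P k * (P k)ᵀ)⁻¹ *
        vecMulVec (y - P 0 *ᵥ x) (a (l - 1))) := by
  have hlmem : l ∈ Finset.Icc 1 L := Finset.mem_Icc.mpr ⟨hl1, hlL⟩
  constructor
  · -- derivative part
    set b : Fin (n (l - 1)) → ℝ := a (l - 1) with hb
    set e : Fin (n l) → ℝ := fun i => a l i - ∑ j, W l i j * b j with he
    set ℓ : Fin (n l) → ((Fin (n l) → Fin (n (l - 1)) → ℝ) →L[ℝ] ℝ) :=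
      fun i => ∑ j, b j • ((ContinuousLinearMap.proj j).comp
        (ContinuousLinearMap.proj (R := ℝ) (φ := fun _ : Fin (n l) => Fin (n (l - 1)) → ℝ) i)) with hℓ
    have hℓ_apply : ∀ i H, ℓ i H = ∑ j, b j * H i j := by
      intro i H
      simp [hℓ, ContinuousLinearMap.sum_apply]
    have hlin : ∀ i, HasFDerivAt
        (fun M : Fin (n l) → Fin (n (l - 1)) → ℝ => ∑ j, M i j * b j)
        (ℓ i) (fun i j => W l i j) := by
      intro i
      have h1 := (ℓ i).hasFDerivAt (x := fun i j => W l i j)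
      have h2 : (fun M : Fin (n l) → Fin (n (l - 1)) → ℝ => ∑ j, M i j * b j)
          = fun M => ℓ i M := by
        funext M
        rw [hℓ_apply]
        exact Finset.sum_congr rfl fun j _ => mul_comm _ _
      rw [h2]
      exact h1
    have hd : ∀ i, HasFDerivAt
        (fun M : Fin (n l) → Fin (n (l - 1)) → ℝ => a l i - ∑ j, M i j * b j)
        (-(ℓ i)) (fun i j => W l i j) := fun i => (hlin i).const_sub (a l i)
    have hsq : ∀ i, HasFDerivAt
        (fun M : Fin (n l) → Fin (n (l - 1)) → ℝ =>
          (a l i - ∑ j, M i j * b j) * (a l i - ∑ j, M i j * b j))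
        (e i • -(ℓ i) + e i • -(ℓ i)) (fun i j => W l i j) := fun i => (hd i).mul (hd i)
    have hsum : HasFDerivAt
        (fun M : Fin (n l) → Fin (n (l - 1)) → ℝ =>
          ∑ i, (a l i - ∑ j, M i j * b j) * (a l i - ∑ j, M i j * b j))
        (∑ i, (e i • -(ℓ i) + e i • -(ℓ i))) (fun i j => W l i j) :=
      HasFDerivAt.fun_sum fun i _ => hsq i
    have hq : HasFDerivAt
        (fun M : Fin (n l) → Fin (n (l - 1)) → ℝ =>
          (1 / 2 : ℝ) * ∑ i, (a l i - ∑ j, M i j * b j) * (a l i - ∑ j, M i j * b j))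
        ((1 / 2 : ℝ) • ∑ i, (e i • -(ℓ i) + e i • -(ℓ i))) (fun i j => W l i j) :=
      hsum.const_mul _
    set C : ℝ := ∑ k ∈ (Finset.Icc 1 L).erase l, (1 / 2 : ℝ) *
        ((a k - W k *ᵥ a (k - 1)) ⬝ᵥ (a k - W k *ᵥ a (k - 1))) with hC
    have hfull := hq.add_const C
    have hfun : (fun M : Fin (n l) → Fin (n (l - 1)) → ℝ =>
        ∑ k ∈ Finset.Icc 1 L, (1 / 2 : ℝ) *
          ((a k - (Function.update W l (Matrix.of M) k) *ᵥ a (k - 1)) ⬝ᵥ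
           (a k - (Function.update W l (Matrix.of M) k) *ᵥ a (k - 1))))
        = (fun M : Fin (n l) → Fin (n (l - 1)) → ℝ =>
          (1 / 2 : ℝ) * ∑ i, (a l i - ∑ j, M i j * b j) * (a l i - ∑ j, M i j * b j) + C) := by
      funext M
      rw [← Finset.add_sum_erase _ _ hlmem, hC]
      congr 1
      · congr 1
        simp [Function.update_self, dotProduct, mulVec, Pi.sub_apply, hb]
      · refine Finset.sum_congr rfl fun k hk => ?_
        rw [Function.update_of_ne (Finset.ne_of_mem_erase hk)]
    have hφψ : φ = (1 / 2 : ℝ) • ∑ i, (e i • -(ℓ i) + e i • -(ℓ i)) := by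
      ext H
      rw [hφ]
      simp only [ContinuousLinearMap.smul_apply, ContinuousLinearMap.sum_apply,
        ContinuousLinearMap.add_apply, ContinuousLinearMap.neg_apply, smul_eq_mul,
        Pi.neg_apply, Matrix.vecMulVec_apply, Pi.sub_apply, Matrix.mulVec, dotProduct,
        Matrix.neg_apply, hℓ_apply, Finset.mul_sum]
      refine Finset.sum_congr rfl fun i _ => ?_
      have hx : ∀ S : ℝ, (1 / 2 : ℝ) * (e i * -S + e i * -S) = -(e i) * S := fun S => by ring
      rw [hx, Finset.mul_sum]
      refine Finset.sum_congr rfl fun j _ => ?_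
      simp only [he]
      ring
    rw [hfun, hφψ]
    exact hfull
  · -- the matrix identity
    have h2 : a l - W l *ᵥ a (l - 1)
        = (P l)ᵀ *ᵥ ((∑ k ∈ Finset.Icc 1 L, P k * (P k)ᵀ)⁻¹ *ᵥ (y - P 0 *ᵥ x)) := by
      rw [heq l hl1 hlL, heqL]
    rw [h2]
    ext i j
    simp only [Matrix.vecMulVec_apply, Matrix.mul_apply, Matrix.mulVec, dotProduct,
      Finset.sum_mul, Finset.mul_sum]
    refine Finset.sum_congr rfl fun k _ => ?_
    refine Finset.sum_congr rfl fun m _ => ?_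
    ring
end

section
/- If each weight matrix W_l(t) evolves under the predictive coding gradient flow dW_l/dt = W_{L:l+1}ᵀ S⁻¹ r x*_{l−1}ᵀ, where x*_{l−1}(t) ∈ ℝ^{n_{l−1}} are any given vectors and all other quantities are formed from the weights at time t, then the prediction ŷ(t) = W_{L:1}(t) x satisfies dŷ/dt = ∑_{l=1}^{L} W_{L:l+1} W_{L:l+1}ᵀ S⁻¹ r (x*_{l−1}ᵀ x̂_{l−1}). -/
open Matrix

/-- If each weight matrix `W_l(t)` evolves under the predictive
coding gradient flow `dW_l/dt = W_{L:l+1}ᵀ S⁻¹ r x*_{l−1}ᵀ`, where `x*_{l−1}` are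
any given vectors, then the prediction `ŷ(t) = W_{L:1}(t) x` satisfies
`dŷ/dt = ∑_{l=1}^L W_{L:l+1} W_{L:l+1}ᵀ S⁻¹ r (x*_{l−1}ᵀ x̂_{l−1})`.
Here `P l t = W_{L:l+1}(t)`, `Q l t = W_{l:1}(t)`, and
`S = ∑_{k=1}^L W_{L:k+1} W_{L:k+1}ᵀ` (which is invertible). -/
theorem stmt7
    (L : ℕ) (hL : 1 ≤ L) (n : ℕ → ℕ)
    (W : ∀ k : ℕ, ℝ → Matrix (Fin (n k)) (Fin (n (k - 1))) ℝ)
    (P : ∀ k : ℕ, ℝ → Matrix (Fin (n L)) (Fin (n k)) ℝ)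
    (hPL : ∀ t : ℝ, P L t = 1)
    (hP : ∀ t : ℝ, ∀ k : ℕ, k < L → P k t = P (k + 1) t * W (k + 1) t)
    (Q : ∀ k : ℕ, ℝ → Matrix (Fin (n k)) (Fin (n 0)) ℝ)
    (hQ0 : ∀ t : ℝ, Q 0 t = 1)
    (hQ : ∀ t : ℝ, ∀ k : ℕ, 1 ≤ k → k ≤ L → Q k t = W k t * Q (k - 1) t)
    (x : Fin (n 0) → ℝ) (y : Fin (n L) → ℝ) (t₀ : ℝ)
    (xs : ∀ k : ℕ, Fin (n k) → ℝ)
    (hS : IsUnit (∑ k ∈ Finset.Icc 1 L, P k t₀ * (P k t₀)ᵀ).det)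
    (hW : ∀ l : ℕ, 1 ≤ l → l ≤ L → ∀ i j, HasDerivAt (fun t => W l t i j)
      (((P l t₀)ᵀ * ((∑ k ∈ Finset.Icc 1 L, P k t₀ * (P k t₀)ᵀ)⁻¹ *
        vecMulVec (y - P 0 t₀ *ᵥ x) (xs (l - 1)))) i j) t₀) :
    HasDerivAt (fun t => P 0 t *ᵥ x)
      (∑ l ∈ Finset.Icc 1 L, (xs (l - 1) ⬝ᵥ (Q (l - 1) t₀ *ᵥ x)) •
        ((P l t₀ * (P l t₀)ᵀ * (∑ k ∈ Finset.Icc 1 L, P k t₀ * (P k t₀)ᵀ)⁻¹) *ᵥ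
          (y - P 0 t₀ *ᵥ x))) t₀ := by
  classical
  set S := (∑ k ∈ Finset.Icc 1 L, P k t₀ * (P k t₀)ᵀ)⁻¹ with hSdef
  set r := y - P 0 t₀ *ᵥ x with hr
  have key : ∀ m k : ℕ, k + m = L →
      ∃ M : Matrix (Fin (n L)) (Fin (n k)) ℝ,
        (∀ i j, HasDerivAt (fun t => P k t i j) (M i j) t₀) ∧
        M * Q k t₀ = ∑ l ∈ Finset.Icc (k + 1) L,
          P l t₀ * ((P l t₀)ᵀ * (S * vecMulVec r (xs (l - 1)))) * Q (l - 1) t₀ := by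
    intro m
    induction m with
    | zero =>
      intro k hk
      have hkL : k = L := by omega
      subst hkL
      refine ⟨0, ?_, ?_⟩
      · intro i j
        have heq : (fun t => P k t i j) = fun _ => (1 : Matrix (Fin (n k)) (Fin (n k)) ℝ) i j := by
          funext t; rw [hPL]
        rw [heq]
        simpa using hasDerivAt_const t₀ ((1 : Matrix (Fin (n k)) (Fin (n k)) ℝ) i j)
      · rw [Finset.Icc_eq_empty (by omega)]
        simp
    | succ m ih =>
      intro k hk
      obtain ⟨M', hM'd, hM'e⟩ := ih (k + 1) (by omega)
      have hkL : k < L := by omega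
      have hk1L : k + 1 ≤ L := by omega
      obtain ⟨Wk, hWk⟩ : ∃ Wk : Matrix (Fin (n (k + 1))) (Fin (n k)) ℝ, Wk = W (k + 1) t₀ :=
        ⟨W (k + 1) t₀, rfl⟩
      refine ⟨M' * Wk + P (k + 1) t₀ * ((P (k + 1) t₀)ᵀ * (S * vecMulVec r (xs k))), ?_, ?_⟩
      · intro i j
        have heq : (fun t => P k t i j) = fun t => ∑ c, P (k + 1) t i c * W (k + 1) t c j := by
          funext t; rw [hP t k hkL, Matrix.mul_apply]
        rw [heq]
        have hd := HasDerivAt.fun_sum (fun c (_ : c ∈ Finset.univ) =>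
          (hM'd i c).mul (hW (k + 1) (by omega) hk1L c j))
        have hval : (M' * Wk + P (k + 1) t₀ * ((P (k + 1) t₀)ᵀ * (S * vecMulVec r (xs k)))) i j
            = ∑ c, (M' i c * W (k + 1) t₀ c j +
              P (k + 1) t₀ i c * ((P (k + 1) t₀)ᵀ * (S * vecMulVec r (xs (k + 1 - 1)))) c j) := by
          rw [Matrix.add_apply, Matrix.mul_apply, Matrix.mul_apply, Finset.sum_add_distrib]
          congr 1
          refine Finset.sum_congr rfl fun c _ => ?_
          rw [hWk]
        rw [hval]
        exact hd
      · have hQk : Q (k + 1) t₀ = Wk * Q k t₀ := by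
          rw [hWk]; exact hQ t₀ (k + 1) (by omega) hk1L
        rw [Matrix.add_mul, Matrix.mul_assoc M', ← hQk, hM'e]
        have hsplit : Finset.Icc (k + 1) L = insert (k + 1) (Finset.Icc (k + 2) L) := by
          ext a
          simp only [Finset.mem_Icc, Finset.mem_insert]
          omega
        rw [hsplit, Finset.sum_insert (by simp)]
        have hql : Q (k + 1 - 1) t₀ = Q k t₀ := rfl
        rw [hql]
        exact add_comm _ _
  obtain ⟨M, hMd, hMe⟩ := key L 0 (by omega)
  rw [hQ0, Matrix.mul_one] at hMe
  have hfin : HasDerivAt (fun t => P 0 t *ᵥ x) (M *ᵥ x) t₀ := by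
    apply hasDerivAt_pi.2
    intro i
    have heq : (fun t => (P 0 t *ᵥ x) i) = fun t => ∑ j, P 0 t i j * x j := by
      funext t; simp [Matrix.mulVec, dotProduct]
    rw [heq]
    have hd := HasDerivAt.fun_sum (fun j (_ : j ∈ Finset.univ) => (hMd i j).mul_const (x j))
    simpa [Matrix.mulVec, dotProduct] using hd
  convert hfin using 1
  rw [hMe, Nat.zero_add]
  have hsum : (∑ l ∈ Finset.Icc 1 L,
      P l t₀ * ((P l t₀)ᵀ * (S * vecMulVec r (xs (l - 1)))) * Q (l - 1) t₀) *ᵥ x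
      = ∑ l ∈ Finset.Icc 1 L,
        (P l t₀ * ((P l t₀)ᵀ * (S * vecMulVec r (xs (l - 1)))) * Q (l - 1) t₀) *ᵥ x := by
    ext i
    simp only [Matrix.mulVec, dotProduct, Finset.sum_apply, Matrix.sum_apply, Finset.sum_mul]
    exact Finset.sum_comm
  rw [hsum]
  refine Finset.sum_congr rfl fun l hl => ?_
  have hvv : ∀ (u v : Fin (n (l - 1)) → ℝ), vecMulVec r u *ᵥ v = (u ⬝ᵥ v) • r := by
    intro u v
    ext i
    simp [Matrix.vecMulVec_apply, Matrix.mulVec, dotProduct, Finset.mul_sum, Finset.sum_mul,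
      smul_eq_mul, mul_comm, mul_assoc, mul_left_comm]
  simp only [← Matrix.mulVec_mulVec, hvv, Matrix.mulVec_smul]
end

section
/- (Theorem 1: PC with adaptive learning rate.) Suppose each weight matrix W_l(t) of a deep linear network evolves as dW_l/dt = α_l W_{L:l+1}ᵀ S⁻¹ r x*_{l−1}ᵀ with layer-specific learning rates α_l = (x*_{l−1}ᵀ x̂_{l−1})⁻¹, where x*_{l−1}ᵀ x̂_{l−1} ≠ 0 for every l = 1, …, L. Then the change in the model prediction is exactly the output residual: dŷ/dt = r. -/
open Matrix

/-- **Theorem 1: PC with adaptive learning rate.** Suppose each weight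
matrix `W_l(t)` of a deep linear network evolves as
`dW_l/dt = α_l W_{L:l+1}ᵀ S⁻¹ r x*_{l−1}ᵀ` with layer-specific learning rates
`α_l = (x*_{l−1}ᵀ x̂_{l−1})⁻¹`, where `x*_{l−1}ᵀ x̂_{l−1} ≠ 0` for every
`l = 1, …, L`.  Then the change in the model prediction is exactly the output
residual: `dŷ/dt = r`.
Here `P l t = W_{L:l+1}(t)`, `Q l t = W_{l:1}(t)`,
`S = ∑_{k=1}^L W_{L:k+1} W_{L:k+1}ᵀ` (which is invertible), and `x*_0 = x`. -/
theorem stmt9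
    (L : ℕ) (hL : 1 ≤ L) (n : ℕ → ℕ)
    (W : ∀ k : ℕ, ℝ → Matrix (Fin (n k)) (Fin (n (k - 1))) ℝ)
    (P : ∀ k : ℕ, ℝ → Matrix (Fin (n L)) (Fin (n k)) ℝ)
    (hPL : ∀ t : ℝ, P L t = 1)
    (hP : ∀ t : ℝ, ∀ k : ℕ, k < L → P k t = P (k + 1) t * W (k + 1) t)
    (Q : ∀ k : ℕ, ℝ → Matrix (Fin (n k)) (Fin (n 0)) ℝ)
    (hQ0 : ∀ t : ℝ, Q 0 t = 1)
    (hQ : ∀ t : ℝ, ∀ k : ℕ, 1 ≤ k → k ≤ L → Q k t = W k t * Q (k - 1) t)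
    (x : Fin (n 0) → ℝ) (y : Fin (n L) → ℝ) (t₀ : ℝ)
    (xs : ∀ k : ℕ, Fin (n k) → ℝ) (hxs0 : xs 0 = x)
    (hS : IsUnit (∑ k ∈ Finset.Icc 1 L, P k t₀ * (P k t₀)ᵀ).det)
    (hne : ∀ l : ℕ, 1 ≤ l → l ≤ L → xs (l - 1) ⬝ᵥ (Q (l - 1) t₀ *ᵥ x) ≠ 0)
    (hW : ∀ l : ℕ, 1 ≤ l → l ≤ L → ∀ i j, HasDerivAt (fun t => W l t i j)
      ((xs (l - 1) ⬝ᵥ (Q (l - 1) t₀ *ᵥ x))⁻¹ •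
        (((P l t₀)ᵀ * ((∑ k ∈ Finset.Icc 1 L, P k t₀ * (P k t₀)ᵀ)⁻¹ *
          vecMulVec (y - P 0 t₀ *ᵥ x) (xs (l - 1)))) i j) ) t₀) :
    HasDerivAt (fun t => P 0 t *ᵥ x) (y - P 0 t₀ *ᵥ x) t₀ := by
  set S : Matrix (Fin (n L)) (Fin (n L)) ℝ := ∑ k ∈ Finset.Icc 1 L, P k t₀ * (P k t₀)ᵀ with hSdef
  set r : Fin (n L) → ℝ := y - P 0 t₀ *ᵥ x with hrdef
  set E : Fin (n L) → ℝ := S⁻¹ *ᵥ r with hEdef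
  -- P k t * Q k t = P 0 t for k ≤ L
  have hPQ : ∀ k : ℕ, k ≤ L → ∀ t : ℝ, P k t * Q k t = P 0 t := by
    intro k
    induction k with
    | zero => intro _ t; rw [hQ0, Matrix.mul_one]
    | succ k ih =>
      intro hk t
      rw [hQ t (k+1) (Nat.succ_le_succ (Nat.zero_le k)) hk]
      have h2 : Q (k+1-1) t = Q k t := rfl
      rw [h2, ← Matrix.mul_assoc, ← hP t k (Nat.lt_of_succ_le hk), ih (Nat.le_of_succ_le hk) t]
  -- P 0 t = Q L t
  have hP0Q : ∀ t : ℝ, P 0 t = Q L t := by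
    intro t
    rw [← hPQ L le_rfl t, hPL, Matrix.one_mul]
  -- main induction
  have main : ∀ k : ℕ, k ≤ L → ∃ u : Fin (n k) → ℝ,
      HasDerivAt (fun t => Q k t *ᵥ x) u t₀ ∧
      P k t₀ *ᵥ u = (∑ l ∈ Finset.Icc 1 k, P l t₀ * (P l t₀)ᵀ) *ᵥ E := by
    intro k
    induction k with
    | zero =>
      intro _
      refine ⟨0, ?_, ?_⟩
      · have h2 : (fun t => Q 0 t *ᵥ x) = fun _ => (1 : Matrix (Fin (n 0)) (Fin (n 0)) ℝ) *ᵥ x := by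
          funext t; rw [hQ0]
        rw [h2]
        exact hasDerivAt_const t₀ _
      · simp
    | succ k ih =>
      intro hk
      obtain ⟨u, hu, hPu⟩ := ih (Nat.le_of_succ_le hk)
      have h1 : 1 ≤ k + 1 := Nat.succ_le_succ (Nat.zero_le k)
      set c : ℝ := xs k ⬝ᵥ (Q k t₀ *ᵥ x) with hcdef
      have hc : c ≠ 0 := hne (k+1) h1 hk
      set W' : Matrix (Fin (n (k+1))) (Fin (n k)) ℝ :=
        c⁻¹ • ((P (k+1) t₀)ᵀ * (S⁻¹ * vecMulVec r (xs k))) with hW'def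
      have hWd : ∀ i j, HasDerivAt (fun t => W (k+1) t i j) (W' i j) t₀ := by
        intro i j
        have := hW (k+1) h1 hk i j
        simpa [hW'def] using this
      refine ⟨W' *ᵥ (Q k t₀ *ᵥ x) + W (k+1) t₀ *ᵥ u, ?_, ?_⟩
      · have hfun : (fun t => Q (k+1) t *ᵥ x) =
            fun t => W (k+1) t *ᵥ (Q k t *ᵥ x) := by
          funext t
          rw [hQ t (k+1) h1 hk, ← mulVec_mulVec]
          rfl
        rw [hfun]
        apply hasDerivAt_pi.2
        intro i
        have h2 : (fun t => (W (k+1) t *ᵥ (Q k t *ᵥ x)) i) =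
            fun t => ∑ j, W (k+1) t i j * (Q k t *ᵥ x) j := by
          funext t; simp only [mulVec, dotProduct]
        rw [h2]
        have hsum : HasDerivAt (fun t => ∑ j, W (k+1) t i j * (Q k t *ᵥ x) j)
            (∑ j, (W' i j * (Q k t₀ *ᵥ x) j + W (k+1) t₀ i j * u j)) t₀ :=
          HasDerivAt.fun_sum fun j _ =>
            (hWd i j).mul (hasDerivAt_pi.1 hu j)
        refine hsum.congr_deriv ?_
        simp only [Pi.add_apply, mulVec, dotProduct, Finset.sum_add_distrib]
        rfl
      · have hvmv : vecMulVec r (xs k) *ᵥ (Q k t₀ *ᵥ x) = c • r := by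
          funext i
          simp only [vecMulVec_apply, mulVec, dotProduct, Pi.smul_apply, smul_eq_mul, hcdef]
          rw [Finset.sum_mul]
          exact Finset.sum_congr rfl fun j _ => by ring
        have e1 : W' *ᵥ (Q k t₀ *ᵥ x) = (P (k+1) t₀)ᵀ *ᵥ E := by
          rw [hW'def, smul_mulVec, ← Matrix.mul_assoc, ← mulVec_mulVec, hvmv,
            mulVec_smul, smul_smul, inv_mul_cancel₀ hc, one_smul, ← mulVec_mulVec, ← hEdef]
        have hterm : P (k+1) t₀ *ᵥ (W' *ᵥ (Q k t₀ *ᵥ x)) =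
            (P (k+1) t₀ * (P (k+1) t₀)ᵀ) *ᵥ E := by
          rw [e1, mulVec_mulVec]
        have hstep : P (k+1) t₀ * W (k+1) t₀ = P k t₀ := (hP t₀ k (Nat.lt_of_succ_le hk)).symm
        have h3 : P (k+1) t₀ *ᵥ (W (k+1) t₀ *ᵥ u) = P k t₀ *ᵥ u := by
          rw [mulVec_mulVec, hstep]
        rw [mulVec_add, hterm, h3, hPu,
          Finset.sum_Icc_succ_top h1, add_mulVec, add_comm]
  obtain ⟨u, hu, hPu⟩ := main L le_rfl
  have hfun : (fun t => P 0 t *ᵥ x) = fun t => Q L t *ᵥ x := by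
    funext t; rw [hP0Q]
  rw [hfun]
  have hur : u = r := by
    have h1 : P L t₀ *ᵥ u = u := by rw [hPL, one_mulVec]
    rw [h1] at hPu
    rw [hPu, hEdef, mulVec_mulVec, ← hSdef, Matrix.mul_nonsing_inv S hS, one_mulVec]
  exact hur ▸ hu
end

section
/- If the weights of a deep linear network evolve under the batch predictive coding gradient flow dW_l/dt = (1/B) W_{L:l+1}ᵀ S⁻¹ R X*_{l−1}ᵀ, where X*_{l−1}(t) ∈ ℝ^{n_{l−1} × B} are any given matrices, then the matrix of predictions Ŷ(t) = W_{L:1}(t) X satisfies dŶ/dt = (1/B) ∑_{l=1}^{L} W_{L:l+1} W_{L:l+1}ᵀ S⁻¹ R X*_{l−1}ᵀ X̂_{l−1}. -/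
open Matrix

private lemma entry_mul_deriv {a b c : ℕ}
    (A : ℝ → Matrix (Fin a) (Fin b) ℝ) (Bf : ℝ → Matrix (Fin b) (Fin c) ℝ)
    (A' : Matrix (Fin a) (Fin b) ℝ) (B' : Matrix (Fin b) (Fin c) ℝ) (t₀ : ℝ)
    (hA : ∀ i j, HasDerivAt (fun t => A t i j) (A' i j) t₀)
    (hB : ∀ i j, HasDerivAt (fun t => Bf t i j) (B' i j) t₀) :
    ∀ i j, HasDerivAt (fun t => (A t * Bf t) i j)
      ((A' * Bf t₀ + A t₀ * B') i j) t₀ := by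
  intro i j
  have h := HasDerivAt.fun_sum (u := (Finset.univ : Finset (Fin b)))
    (A := fun k t => A t i k * Bf t k j) (A' := fun k => A' i k * Bf t₀ k j + A t₀ i k * B' k j)
    (fun k _ => (hA i k).mul (hB k j))
  simpa [Matrix.mul_apply, Matrix.add_apply, Finset.sum_add_distrib] using h

/-- If the weights of a deep linear network evolve under the batch
predictive coding gradient flow `dW_l/dt = (1/B) W_{L:l+1}ᵀ S⁻¹ R X*_{l−1}ᵀ`, where
`X*_{l−1}` are any given matrices, then the matrix of predictions
`Ŷ(t) = W_{L:1}(t) X` satisfies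
`dŶ/dt = (1/B) ∑_{l=1}^L W_{L:l+1} W_{L:l+1}ᵀ S⁻¹ R X*_{l−1}ᵀ X̂_{l−1}`.
Here `P l t = W_{L:l+1}(t)`, `Q l t = W_{l:1}(t)`, `R = Y − W_{L:1} X`,
`X̂_{l−1} = W_{l−1:1} X`, and `S = ∑_{k=1}^L W_{L:k+1} W_{L:k+1}ᵀ` (invertible);
derivatives of matrix-valued functions are stated entrywise. -/
theorem stmt11
    (L : ℕ) (hL : 1 ≤ L) (n : ℕ → ℕ) (B : ℕ) (hB : 0 < B)
    (W : ∀ k : ℕ, ℝ → Matrix (Fin (n k)) (Fin (n (k - 1))) ℝ)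
    (P : ∀ k : ℕ, ℝ → Matrix (Fin (n L)) (Fin (n k)) ℝ)
    (hPL : ∀ t : ℝ, P L t = 1)
    (hP : ∀ t : ℝ, ∀ k : ℕ, k < L → P k t = P (k + 1) t * W (k + 1) t)
    (Q : ∀ k : ℕ, ℝ → Matrix (Fin (n k)) (Fin (n 0)) ℝ)
    (hQ0 : ∀ t : ℝ, Q 0 t = 1)
    (hQ : ∀ t : ℝ, ∀ k : ℕ, 1 ≤ k → k ≤ L → Q k t = W k t * Q (k - 1) t)
    (X : Matrix (Fin (n 0)) (Fin B) ℝ) (Y : Matrix (Fin (n L)) (Fin B) ℝ) (t₀ : ℝ)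
    (Xs : ∀ k : ℕ, Matrix (Fin (n k)) (Fin B) ℝ)
    (hS : IsUnit (∑ k ∈ Finset.Icc 1 L, P k t₀ * (P k t₀)ᵀ).det)
    (hW : ∀ l : ℕ, 1 ≤ l → l ≤ L → ∀ i j, HasDerivAt (fun t => W l t i j)
      (((1 / (B : ℝ)) • ((P l t₀)ᵀ * (∑ k ∈ Finset.Icc 1 L, P k t₀ * (P k t₀)ᵀ)⁻¹ *
        (Y - P 0 t₀ * X) * (Xs (l - 1))ᵀ)) i j) t₀) :
    ∀ i b, HasDerivAt (fun t => (P 0 t * X) i b)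
      (((1 / (B : ℝ)) • ∑ l ∈ Finset.Icc 1 L,
        P l t₀ * (P l t₀)ᵀ * (∑ k ∈ Finset.Icc 1 L, P k t₀ * (P k t₀)ᵀ)⁻¹ *
          (Y - P 0 t₀ * X) * (Xs (l - 1))ᵀ * (Q (l - 1) t₀ * X)) i b) t₀ := by
  set S : Matrix (Fin (n L)) (Fin (n L)) ℝ :=
    ∑ k ∈ Finset.Icc 1 L, P k t₀ * (P k t₀)ᵀ with hSdef
  set C : ∀ l : ℕ, Matrix (Fin (n l)) (Fin (n (l - 1))) ℝ := fun l =>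
    (1 / (B : ℝ)) • ((P l t₀)ᵀ * S⁻¹ * (Y - P 0 t₀ * X) * (Xs (l - 1))ᵀ) with hCdef
  -- P 0 t = P k t * Q k t
  have hPQ : ∀ t : ℝ, ∀ k : ℕ, k ≤ L → P 0 t = P k t * Q k t := by
    intro t k
    induction k with
    | zero => intro _; rw [hQ0, Matrix.mul_one]
    | succ k ih =>
      intro hk
      rw [hQ t (k + 1) (Nat.le_add_left 1 k) hk]
      rw [ih (Nat.le_of_succ_le hk), hP t k (Nat.lt_of_succ_le hk), Matrix.mul_assoc]
      rfl
  have key : ∀ k : ℕ, k ≤ L → ∃ D : Matrix (Fin (n k)) (Fin (n 0)) ℝ,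
      (∀ i j, HasDerivAt (fun t => Q k t i j) (D i j) t₀) ∧
      P k t₀ * D = ∑ l ∈ Finset.Icc 1 k, P l t₀ * C l * Q (l - 1) t₀ := by
    intro k
    induction k with
    | zero =>
      intro _
      refine ⟨0, fun i j => ?_, by simp⟩
      have : (fun t => Q 0 t i j) = fun _ => (1 : Matrix (Fin (n 0)) (Fin (n 0)) ℝ) i j :=
        funext fun t => by rw [hQ0]
      rw [this]
      simpa using hasDerivAt_const t₀ ((1 : Matrix (Fin (n 0)) (Fin (n 0)) ℝ) i j)
    | succ k ih =>
      intro hk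
      obtain ⟨D, hD, hPD⟩ := ih (Nat.le_of_succ_le hk)
      refine ⟨C (k + 1) * Q (k + 1 - 1) t₀ + W (k + 1) t₀ *
          (show Matrix (Fin (n (k + 1 - 1))) (Fin (n 0)) ℝ from D), fun i j => ?_, ?_⟩
      · have hfun : (fun t => Q (k + 1) t i j)
            = fun t => (W (k + 1) t * Q (k + 1 - 1) t) i j :=
          funext fun t => by rw [hQ t (k + 1) (Nat.le_add_left 1 k) hk]
        rw [hfun]
        exact entry_mul_deriv (W (k + 1)) (Q (k + 1 - 1)) (C (k + 1)) D t₀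
          (hW (k + 1) (Nat.le_add_left 1 k) hk) hD i j
      · rw [Finset.sum_Icc_succ_top (Nat.le_add_left 1 k)]
        rw [Matrix.mul_add, ← Matrix.mul_assoc (P (k + 1) t₀) (W (k + 1) t₀) D,
          ← hP t₀ k (Nat.lt_of_succ_le hk), hPD, ← Matrix.mul_assoc]
        rw [add_comm]
  obtain ⟨D, hD, hPD⟩ := key L le_rfl
  rw [hPL t₀, Matrix.one_mul] at hPD
  intro i b
  have hfun : (fun t => (P 0 t * X) i b) = fun t => (Q L t * X) i b :=
    funext fun t => by rw [hPQ t L le_rfl, hPL t, Matrix.one_mul]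
  rw [hfun]
  have h := entry_mul_deriv (Q L) (fun _ => X) D 0 t₀ hD
    (fun i j => by simpa using hasDerivAt_const t₀ (X i j)) i b
  have hmat : D * X + Q L t₀ * (0 : Matrix (Fin (n 0)) (Fin B) ℝ)
      = (1 / (B : ℝ)) • ∑ l ∈ Finset.Icc 1 L,
        P l t₀ * (P l t₀)ᵀ * S⁻¹ * (Y - P 0 t₀ * X) * (Xs (l - 1))ᵀ * (Q (l - 1) t₀ * X) := by
    rw [Matrix.mul_zero, add_zero, hPD, Matrix.sum_mul, Finset.smul_sum]
    refine Finset.sum_congr rfl fun l hl => ?_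
    simp [hCdef, Matrix.mul_smul, Matrix.smul_mul, Matrix.mul_assoc]
  rw [hmat] at h
  exact h
end

section
/- (Theorem 2: PC with weight update rescaling.) Suppose each weight matrix W_l(t) of a deep linear network evolves as dW_l/dt = (1/B) W_{L:l+1}ᵀ S⁻¹ R X*_{l−1}ᵀ A_l, where for each l = 1, …, L the rescaling matrix A_l ∈ ℝ^{n_{l−1} × n_{l−1}} satisfies the decorrelation condition X*_{l−1}ᵀ A_l X̂_{l−1} = I_B (the B × B identity). Then the matrix of predictions satisfies dŶ/dt = (1/B) R; equivalently, for every sample b = 1, …, B, the change in prediction dŷ_b/dt equals (1/B) r_b, the corresponding output residual scaled by 1/B. -/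
open Matrix

/-- **Theorem 2: PC with weight update rescaling.** Suppose each
weight matrix `W_l(t)` of a deep linear network evolves as
`dW_l/dt = (1/B) W_{L:l+1}ᵀ S⁻¹ R X*_{l−1}ᵀ A_l`, where for each `l = 1, …, L` the
rescaling matrix `A_l ∈ ℝ^{n_{l−1} × n_{l−1}}` satisfies the decorrelation condition
`X*_{l−1}ᵀ A_l X̂_{l−1} = I_B`.  Then `dŶ/dt = (1/B) R`; equivalently, for every
sample `b`, the change in prediction `dŷ_b/dt` equals `(1/B) r_b`.
Here `P l t = W_{L:l+1}(t)`, `Q l t = W_{l:1}(t)`, `R = Y − W_{L:1} X`,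
`X̂_{l−1} = W_{l−1:1} X`, and `S = ∑_{k=1}^L W_{L:k+1} W_{L:k+1}ᵀ` (invertible);
derivatives of matrix-valued functions are stated entrywise, so the conclusion
states exactly that each sample's prediction changes by `(1/B)` times its output
residual. -/
theorem stmt12
    (L : ℕ) (hL : 1 ≤ L) (n : ℕ → ℕ) (B : ℕ) (hB : 0 < B)
    (W : ∀ k : ℕ, ℝ → Matrix (Fin (n k)) (Fin (n (k - 1))) ℝ)
    (P : ∀ k : ℕ, ℝ → Matrix (Fin (n L)) (Fin (n k)) ℝ)
    (hPL : ∀ t : ℝ, P L t = 1)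
    (hP : ∀ t : ℝ, ∀ k : ℕ, k < L → P k t = P (k + 1) t * W (k + 1) t)
    (Q : ∀ k : ℕ, ℝ → Matrix (Fin (n k)) (Fin (n 0)) ℝ)
    (hQ0 : ∀ t : ℝ, Q 0 t = 1)
    (hQ : ∀ t : ℝ, ∀ k : ℕ, 1 ≤ k → k ≤ L → Q k t = W k t * Q (k - 1) t)
    (X : Matrix (Fin (n 0)) (Fin B) ℝ) (Y : Matrix (Fin (n L)) (Fin B) ℝ) (t₀ : ℝ)
    (Xs : ∀ k : ℕ, Matrix (Fin (n k)) (Fin B) ℝ)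
    (A : ∀ k : ℕ, Matrix (Fin (n (k - 1))) (Fin (n (k - 1))) ℝ)
    (hS : IsUnit (∑ k ∈ Finset.Icc 1 L, P k t₀ * (P k t₀)ᵀ).det)
    (hA : ∀ l : ℕ, 1 ≤ l → l ≤ L →
      (Xs (l - 1))ᵀ * A l * (Q (l - 1) t₀ * X) = (1 : Matrix (Fin B) (Fin B) ℝ))
    (hW : ∀ l : ℕ, 1 ≤ l → l ≤ L → ∀ i j, HasDerivAt (fun t => W l t i j)
      (((1 / (B : ℝ)) • ((P l t₀)ᵀ * (∑ k ∈ Finset.Icc 1 L, P k t₀ * (P k t₀)ᵀ)⁻¹ *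
        (Y - P 0 t₀ * X) * (Xs (l - 1))ᵀ * A l)) i j) t₀) :
    ∀ i b, HasDerivAt (fun t => (P 0 t * X) i b)
      (((1 / (B : ℝ)) • (Y - P 0 t₀ * X)) i b) t₀ := by
  classical
  set S := ∑ k ∈ Finset.Icc 1 L, P k t₀ * (P k t₀)ᵀ with hSdef
  set R := Y - P 0 t₀ * X with hRdef
  -- defeq casts with clean indices
  let Wc : ∀ m : ℕ, ℝ → Matrix (Fin (n (m + 1))) (Fin (n m)) ℝ := fun m => W (m + 1)
  let Ac : ∀ m : ℕ, Matrix (Fin (n m)) (Fin (n m)) ℝ := fun m => A (m + 1)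
  have hPc : ∀ t : ℝ, ∀ k : ℕ, k < L → P k t = P (k + 1) t * Wc k t :=
    fun t k h => hP t k h
  have hQc : ∀ t : ℝ, ∀ k : ℕ, k + 1 ≤ L → Q (k + 1) t = Wc k t * Q k t :=
    fun t k h => hQ t (k + 1) (by omega) h
  have hAc : ∀ k : ℕ, k + 1 ≤ L →
      (Xs k)ᵀ * Ac k * (Q k t₀ * X) = (1 : Matrix (Fin B) (Fin B) ℝ) :=
    fun k h => hA (k + 1) (by omega) h
  have hWc : ∀ k : ℕ, k + 1 ≤ L → ∀ (i : Fin (n (k + 1))) (j : Fin (n k)),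
      HasDerivAt (fun t => Wc k t i j)
        (((1 / (B : ℝ)) • ((P (k + 1) t₀)ᵀ * S⁻¹ * R * (Xs k)ᵀ * Ac k)) i j) t₀ :=
    fun k h i j => hW (k + 1) (by omega) h i j
  let G : ∀ k : ℕ, Matrix (Fin (n k)) (Fin B) ℝ :=
    fun k => Nat.rec (motive := fun k => Matrix (Fin (n k)) (Fin B) ℝ) 0
      (fun m ih => (1 / (B : ℝ)) • ((P (m + 1) t₀)ᵀ * S⁻¹ * R) + Wc m t₀ * ih) k
  have hG0 : G 0 = 0 := rfl
  have hGs : ∀ m : ℕ, G (m + 1)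
      = (1 / (B : ℝ)) • ((P (m + 1) t₀)ᵀ * S⁻¹ * R) + Wc m t₀ * G m := fun m => rfl
  -- Lemma A : entrywise derivative of Q k * X
  have hQX : ∀ k, k ≤ L → ∀ (i : Fin (n k)) (b : Fin B),
      HasDerivAt (fun t => (Q k t * X) i b) (G k i b) t₀ := by
    intro k
    induction k with
    | zero =>
      intro _ i b
      have h0 : (fun t => (Q 0 t * X) i b) = fun _ => X i b := by
        funext t; rw [hQ0 t, Matrix.one_mul]
      rw [h0]
      have hz : G 0 i b = 0 := by rw [hG0]; rfl
      rw [hz]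
      exact hasDerivAt_const t₀ (X i b)
    | succ k ih =>
      intro hk i b
      have hk' : k ≤ L := le_of_lt hk
      have hfun : (fun t => (Q (k + 1) t * X) i b)
          = fun t => ∑ j : Fin (n k), Wc k t i j * (Q k t * X) j b := by
        funext t
        rw [hQc t k hk, Matrix.mul_assoc, Matrix.mul_apply]
      rw [hfun]
      have hder := HasDerivAt.sum (x := t₀)
        (fun j (_ : j ∈ (Finset.univ : Finset (Fin (n k)))) =>
          (hWc k hk i j).mul (ih hk' j b))
      have h1 : (Xs k)ᵀ * (Ac k * (Q k t₀ * X)) = (1 : Matrix (Fin B) (Fin B) ℝ) := by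
        rw [← Matrix.mul_assoc]; exact hAc k hk
      have hDW : ((1 / (B : ℝ)) • ((P (k + 1) t₀)ᵀ * S⁻¹ * R * (Xs k)ᵀ * Ac k))
            * (Q k t₀ * X)
          = (1 / (B : ℝ)) • ((P (k + 1) t₀)ᵀ * S⁻¹ * R) := by
        rw [Matrix.smul_mul]
        congr 1
        simp only [Matrix.mul_assoc]
        rw [h1, Matrix.mul_one]
      have hval : (∑ j : Fin (n k),
            (((1 / (B : ℝ)) • ((P (k + 1) t₀)ᵀ * S⁻¹ * R * (Xs k)ᵀ * Ac k)) i j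
                * (Q k t₀ * X) j b
              + Wc k t₀ i j * G k j b))
          = G (k + 1) i b := by
        rw [Finset.sum_add_distrib, ← Matrix.mul_apply, ← Matrix.mul_apply, hDW, hGs k,
          Matrix.add_apply]
      rw [← hval]
      refine HasDerivAt.congr_of_eventuallyEq hder (Filter.Eventually.of_forall fun t => ?_)
      simp [Finset.sum_apply]
  -- Lemma B : P k * G k
  have hPG : ∀ k, k ≤ L →
      P k t₀ * G k
        = (1 / (B : ℝ)) • ((∑ l ∈ Finset.Icc 1 k, P l t₀ * (P l t₀)ᵀ) * S⁻¹ * R) := by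
    intro k
    induction k with
    | zero =>
      intro _
      rw [hG0, Matrix.mul_zero, Finset.Icc_eq_empty (by omega), Finset.sum_empty,
        Matrix.zero_mul, Matrix.zero_mul, smul_zero]
    | succ k ih =>
      intro hk
      have hk' : k ≤ L := le_of_lt hk
      rw [hGs k, Matrix.mul_add, ← Matrix.mul_assoc (P (k + 1) t₀) (Wc k t₀) (G k),
        ← hPc t₀ k (by omega), ih hk',
        Finset.sum_Icc_succ_top (by omega : 1 ≤ k + 1),
        Matrix.add_mul, Matrix.add_mul, smul_add, Matrix.mul_smul]
      have hassoc : P (k + 1) t₀ * ((P (k + 1) t₀)ᵀ * S⁻¹ * R)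
          = P (k + 1) t₀ * (P (k + 1) t₀)ᵀ * S⁻¹ * R := by
        simp only [Matrix.mul_assoc]
      rw [hassoc, add_comm]
  -- P 0 t = P k t * Q k t
  have hPQ : ∀ t : ℝ, ∀ k, k ≤ L → P 0 t = P k t * Q k t := by
    intro t k
    induction k with
    | zero => intro _; rw [hQ0, Matrix.mul_one]
    | succ k ih =>
      intro hk
      rw [ih (le_of_lt hk), hPc t k (by omega), hQc t k hk, Matrix.mul_assoc]
  intro i b
  have hfun : (fun t => (P 0 t * X) i b) = fun t => (Q L t * X) i b := by
    funext t
    rw [hPQ t L le_rfl, hPL t, Matrix.one_mul]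
  have hGL : G L = (1 / (B : ℝ)) • R := by
    have h1 := hPG L le_rfl
    rw [hPL t₀, Matrix.one_mul] at h1
    rw [h1, Matrix.mul_nonsing_inv S hS, Matrix.one_mul]
  rw [hfun]
  have hd := hQX L le_rfl i b
  rwa [hGL] at hd
end

section
/- If each weight matrix W_l(t) of a linear residual network evolves under the backpropagation gradient flow dW_l/dt = W̃_{L−1:l+1}ᵀ r x̂_{l−1}ᵀ (all quantities evaluated from the weights at time t), then the prediction ŷ(t) = W̃_{L−1:1}(t) x satisfies dŷ/dt = ∑_{l=1}^{L−1} W̃_{L−1:l+1} W̃_{L−1:l+1}ᵀ r (x̂_{l−1}ᵀ x̂_{l−1}). -/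
open Matrix

lemma aux_vecMulVec_mulVec {N : ℕ} (a b v : Fin N → ℝ) :
    vecMulVec a b *ᵥ v = (b ⬝ᵥ v) • a := by
  ext i
  simp [vecMulVec, mulVec, dotProduct, Finset.mul_sum, mul_comm, mul_assoc, mul_left_comm]

lemma aux_sum_mulVec {N : ℕ} (s : Finset ℕ) (A : ℕ → Matrix (Fin N) (Fin N) ℝ)
    (v : Fin N → ℝ) : (∑ k ∈ s, A k) *ᵥ v = ∑ k ∈ s, A k *ᵥ v := by
  ext i
  simp only [mulVec, dotProduct, Finset.sum_apply, Matrix.sum_apply, Finset.sum_mul]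
  exact Finset.sum_comm

/-- If each weight matrix `W_l(t)` of a linear residual network
evolves under the backpropagation gradient flow
`dW_l/dt = W̃_{L−1:l+1}ᵀ r x̂_{l−1}ᵀ`, then the prediction `ŷ(t) = W̃_{L−1:1}(t) x`
satisfies `dŷ/dt = ∑_{l=1}^{L−1} W̃_{L−1:l+1} W̃_{L−1:l+1}ᵀ r (x̂_{l−1}ᵀ x̂_{l−1})`.
Here `P l t = W̃_{L−1:l+1}(t)` and `Q l t = W̃_{l:1}(t)` are the partial products of
the residual factors `I + W_k`, `x̂_l = W̃_{l:1} x` and `r = y − ŷ`. -/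
theorem stmt15
    (L N : ℕ) (hL : 2 ≤ L)
    (W : ℕ → ℝ → Matrix (Fin N) (Fin N) ℝ)
    (P Q : ℕ → ℝ → Matrix (Fin N) (Fin N) ℝ)
    (hPtop : ∀ t : ℝ, P (L - 1) t = 1)
    (hP : ∀ t : ℝ, ∀ l : ℕ, l < L - 1 → P l t = P (l + 1) t * (1 + W (l + 1) t))
    (hQ0 : ∀ t : ℝ, Q 0 t = 1)
    (hQ : ∀ t : ℝ, ∀ l : ℕ, 1 ≤ l → l ≤ L - 1 → Q l t = (1 + W l t) * Q (l - 1) t)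
    (x y : Fin N → ℝ) (t₀ : ℝ)
    (hW : ∀ l : ℕ, 1 ≤ l → l ≤ L - 1 → ∀ i j, HasDerivAt (fun t => W l t i j)
      (((P l t₀)ᵀ * vecMulVec (y - P 0 t₀ *ᵥ x) (Q (l - 1) t₀ *ᵥ x)) i j) t₀) :
    HasDerivAt (fun t => P 0 t *ᵥ x)
      (∑ l ∈ Finset.Icc 1 (L - 1), ((Q (l - 1) t₀ *ᵥ x) ⬝ᵥ (Q (l - 1) t₀ *ᵥ x)) •
        ((P l t₀ * (P l t₀)ᵀ) *ᵥ (y - P 0 t₀ *ᵥ x))) t₀ := by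
  set M := L - 1 with hM
  have hM1 : 1 ≤ M := by omega
  set r : Fin N → ℝ := y - P 0 t₀ *ᵥ x with hr
  set W' : ℕ → Matrix (Fin N) (Fin N) ℝ :=
    fun k => (P k t₀)ᵀ * vecMulVec r (Q (k - 1) t₀ *ᵥ x) with hW'
  -- the derivative of Q l, defined recursively
  set E : ℕ → Matrix (Fin N) (Fin N) ℝ :=
    fun l => Nat.rec 0 (fun l El => W' (l + 1) * Q l t₀ + (1 + W (l + 1) t₀) * El) l with hE
  have hE0 : E 0 = 0 := rfl
  have hEsucc : ∀ l, E (l + 1) = W' (l + 1) * Q l t₀ + (1 + W (l + 1) t₀) * E l := fun l => rfl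
  -- Claim 1: entrywise derivative of Q l
  have claim1 : ∀ l, l ≤ M → ∀ i j, HasDerivAt (fun t => Q l t i j) (E l i j) t₀ := by
    intro l
    induction l with
    | zero =>
      intro _ i j
      simp only [hQ0, hE0, Matrix.zero_apply]
      exact hasDerivAt_const t₀ _
    | succ l ih =>
      intro hl i j
      have hl' : l ≤ M := by omega
      have hrec : ∀ t, Q (l + 1) t = (1 + W (l + 1) t) * Q l t := by
        intro t
        simpa using hQ t (l + 1) (by omega) hl
      have key : HasDerivAt (fun t => ∑ m, (1 + W (l + 1) t) i m * Q l t m j)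
          (∑ m, (W' (l + 1) i m * Q l t₀ m j + (1 + W (l + 1) t₀) i m * E l m j)) t₀ := by
        apply HasDerivAt.fun_sum
        intro m _
        have h1 : HasDerivAt (fun t => (1 + W (l + 1) t) i m) (W' (l + 1) i m) t₀ := by
          have := hW (l + 1) (by omega) hl i m
          simp only [Matrix.add_apply, Matrix.one_apply]
          have h2 : (fun t => (1 : Matrix (Fin N) (Fin N) ℝ) i m + W (l + 1) t i m)
              = fun t => (if i = m then (1:ℝ) else 0) + W (l + 1) t i m := by
            simp [Matrix.one_apply]
          simpa [hW', hr] using (hasDerivAt_const t₀ (if i = m then (1:ℝ) else 0)).fun_add this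
        exact h1.mul (ih hl' m j)
      have heq : (fun t => Q (l + 1) t i j) = fun t => ∑ m, (1 + W (l + 1) t) i m * Q l t m j := by
        funext t
        rw [hrec t, Matrix.mul_apply]
      rw [heq, hEsucc]
      convert key using 1
      simp [Matrix.add_apply, Matrix.mul_apply, Finset.sum_add_distrib]
  -- Claim 2: closed form for P l * E l
  have claim2 : ∀ l, l ≤ M →
      P l t₀ * E l = ∑ k ∈ Finset.Icc 1 l, P k t₀ * W' k * Q (k - 1) t₀ := by
    intro l
    induction l with
    | zero => simp [hE0]
    | succ l ih =>
      intro hl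
      have hl' : l ≤ M := by omega
      rw [Finset.sum_Icc_succ_top (by omega), ← ih hl', hEsucc]
      have hPl : P l t₀ = P (l + 1) t₀ * (1 + W (l + 1) t₀) := hP t₀ l (by omega)
      simp only [Nat.add_sub_cancel]
      rw [mul_add, hPl]
      ring_nf
      rw [add_comm]
      congr 1 <;> noncomm_ring
  -- Claim 3: P 0 t = P l t * Q l t
  have claim3 : ∀ t, ∀ l, l ≤ M → P 0 t = P l t * Q l t := by
    intro t l
    induction l with
    | zero => intro _; simp [hQ0]
    | succ l ih =>
      intro hl
      have := hQ t (l + 1) (by omega) hl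
      simp only [Nat.add_sub_cancel] at this
      rw [this, ← mul_assoc, ← hP t l (by omega), ih (by omega)]
  have hP0Q : ∀ t, P 0 t = Q M t := by
    intro t
    rw [claim3 t M le_rfl, hPtop]
    simp [hM]
  -- derivative of Q M *ᵥ x
  have hEM : E M = ∑ k ∈ Finset.Icc 1 M, P k t₀ * W' k * Q (k - 1) t₀ := by
    rw [← claim2 M le_rfl]
    rw [show P M t₀ = 1 from by rw [hPtop], one_mul]
  have hderiv : HasDerivAt (fun t => Q M t *ᵥ x) (E M *ᵥ x) t₀ := by
    rw [hasDerivAt_pi]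
    intro i
    have : (fun t => (Q M t *ᵥ x) i) = fun t => ∑ j, Q M t i j * x j := by
      funext t; simp [mulVec, dotProduct]
    rw [this]
    have : (E M *ᵥ x) i = ∑ j, E M i j * x j := by simp [mulVec, dotProduct]
    rw [this]
    exact HasDerivAt.fun_sum fun j _ => (claim1 M le_rfl i j).mul_const (x j)
  have hfun : (fun t => P 0 t *ᵥ x) = fun t => Q M t *ᵥ x := by
    funext t; rw [hP0Q t]
  rw [hfun]
  convert hderiv using 1
  rw [hEM, aux_sum_mulVec]
  apply Finset.sum_congr rfl
  intro k hk
  symm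
  simp only [hW']
  rw [← mulVec_mulVec, ← mulVec_mulVec, ← mulVec_mulVec, aux_vecMulVec_mulVec,
    mulVec_smul, mulVec_smul, mulVec_mulVec, hr]
end

section
/- Let the activities x_1 = x, …, x_L = y of a linear residual network satisfy the equilibrium relations ε_l = W̃_{L−1:l+1}ᵀ ε_{L−1} for all l = 1, …, L−1, where ε_l = x_{l+1} − (I + W_l) x_l. Then: (i) the matrix S̃ = ∑_{l=1}^{L−1} W̃_{L−1:l+1} W̃_{L−1:l+1}ᵀ is symmetric positive definite, hence invertible; (ii) the residual satisfies r = y − W̃_{L−1:1} x = S̃ ε_{L−1}, so ε_{L−1} = S̃⁻¹ r; and (iii) the ResNet PC energy at these activities equals E = ∑_{l=1}^{L−1} (1/2)‖ε_l‖² = (1/2) rᵀ S̃⁻¹ r. -/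
open Matrix

/-- Let the activities `x_1 = x, …, x_L = y` of a linear residual
network satisfy the equilibrium relations `ε_l = W̃_{L−1:l+1}ᵀ ε_{L−1}` for all
`l = 1, …, L−1`, where `ε_l = x_{l+1} − (I + W_l) x_l`.  Then:
(i) `S̃ = ∑_{l=1}^{L−1} W̃_{L−1:l+1} W̃_{L−1:l+1}ᵀ` is symmetric positive definite,
hence invertible; (ii) the residual satisfies `r = y − W̃_{L−1:1} x = S̃ ε_{L−1}`,
so `ε_{L−1} = S̃⁻¹ r`; (iii) the ResNet PC energy at these activities equals
`E = ∑_{l=1}^{L−1} (1/2)‖ε_l‖² = (1/2) rᵀ S̃⁻¹ r`.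
Here `a` is the family of activities and `P l = W̃_{L−1:l+1}`. -/
theorem stmt17
    (L N : ℕ) (hL : 2 ≤ L)
    (W : ℕ → Matrix (Fin N) (Fin N) ℝ)
    (P : ℕ → Matrix (Fin N) (Fin N) ℝ)
    (hPtop : P (L - 1) = 1)
    (hP : ∀ l : ℕ, l < L - 1 → P l = P (l + 1) * (1 + W (l + 1)))
    (x y : Fin N → ℝ)
    (a : ℕ → Fin N → ℝ) (ha1 : a 1 = x) (haL : a L = y)
    (heq : ∀ l : ℕ, 1 ≤ l → l ≤ L - 1 →
      a (l + 1) - (1 + W l) *ᵥ a l =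
        (P l)ᵀ *ᵥ (a L - (1 + W (L - 1)) *ᵥ a (L - 1))) :
    -- (i) `S̃` is symmetric positive definite, hence invertible
    ((∑ l ∈ Finset.Icc 1 (L - 1), P l * (P l)ᵀ)ᵀ =
        ∑ l ∈ Finset.Icc 1 (L - 1), P l * (P l)ᵀ ∧
      (∑ l ∈ Finset.Icc 1 (L - 1), P l * (P l)ᵀ).PosDef ∧
      IsUnit (∑ l ∈ Finset.Icc 1 (L - 1), P l * (P l)ᵀ)) ∧
    -- (ii) `r = S̃ ε_{L−1}` and `ε_{L−1} = S̃⁻¹ r`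
    (y - P 0 *ᵥ x =
        (∑ l ∈ Finset.Icc 1 (L - 1), P l * (P l)ᵀ) *ᵥ
          (a L - (1 + W (L - 1)) *ᵥ a (L - 1)) ∧
      a L - (1 + W (L - 1)) *ᵥ a (L - 1) =
        (∑ l ∈ Finset.Icc 1 (L - 1), P l * (P l)ᵀ)⁻¹ *ᵥ (y - P 0 *ᵥ x)) ∧
    -- (iii) the PC energy equals `(1/2) rᵀ S̃⁻¹ r`
    (∑ l ∈ Finset.Icc 1 (L - 1), (1 / 2 : ℝ) *
        ((a (l + 1) - (1 + W l) *ᵥ a l) ⬝ᵥ (a (l + 1) - (1 + W l) *ᵥ a l)) =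
      (1 / 2 : ℝ) * ((y - P 0 *ᵥ x) ⬝ᵥ
        ((∑ l ∈ Finset.Icc 1 (L - 1), P l * (P l)ᵀ)⁻¹ *ᵥ (y - P 0 *ᵥ x)))) := by
  have hL1 : 1 ≤ L - 1 := by omega
  set S : Matrix (Fin N) (Fin N) ℝ := ∑ l ∈ Finset.Icc 1 (L - 1), P l * (P l)ᵀ with hSdef
  set ε : Fin N → ℝ := a L - (1 + W (L - 1)) *ᵥ a (L - 1) with hεdef
  have hmem : L - 1 ∈ Finset.Icc 1 (L - 1) := Finset.mem_Icc.2 ⟨hL1, le_refl _⟩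
  have hsumMV : ∀ (v : Fin N → ℝ), S *ᵥ v = ∑ l ∈ Finset.Icc 1 (L - 1), (P l * (P l)ᵀ) *ᵥ v := by
    intro v
    ext j
    simp [hSdef, Matrix.mulVec, dotProduct, Matrix.sum_apply, Finset.sum_mul,
      Finset.sum_apply]
    rw [Finset.sum_comm]
  have hdotsum : ∀ (v : Fin N → ℝ) (f : ℕ → Fin N → ℝ),
      v ⬝ᵥ (∑ l ∈ Finset.Icc 1 (L - 1), f l) = ∑ l ∈ Finset.Icc 1 (L - 1), v ⬝ᵥ f l := by
    intro v f
    simp [dotProduct, Finset.mul_sum, Finset.sum_apply]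
    rw [Finset.sum_comm]
  have hdnn : ∀ w : Fin N → ℝ, 0 ≤ w ⬝ᵥ w := by
    intro w
    simp only [dotProduct]
    exact Finset.sum_nonneg fun i _ => mul_self_nonneg _
  -- symmetry
  have hsymm : Sᵀ = S := by
    rw [hSdef, Matrix.transpose_sum]
    refine Finset.sum_congr rfl fun l _ => ?_
    rw [Matrix.transpose_mul, Matrix.transpose_transpose]
  -- quadratic form
  have hquad : ∀ v : Fin N → ℝ, v ⬝ᵥ (S *ᵥ v)
      = ∑ l ∈ Finset.Icc 1 (L - 1), ((P l)ᵀ *ᵥ v) ⬝ᵥ ((P l)ᵀ *ᵥ v) := by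
    intro v
    rw [hsumMV, hdotsum]
    refine Finset.sum_congr rfl fun l _ => ?_
    rw [← Matrix.mulVec_mulVec, Matrix.dotProduct_mulVec, ← Matrix.mulVec_transpose]
  -- positive definiteness
  have hpos : S.PosDef := by
    refine Matrix.posDef_iff_dotProduct_mulVec.2 ⟨?_, fun v hv => ?_⟩
    · rw [Matrix.IsHermitian, Matrix.conjTranspose_eq_transpose_of_trivial]
      exact hsymm
    · have hsv : star v = v := by simp
      rw [hsv, hquad]
      have h1 : 0 < ((P (L - 1))ᵀ *ᵥ v) ⬝ᵥ ((P (L - 1))ᵀ *ᵥ v) := by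
        rw [hPtop]
        simp only [Matrix.transpose_one, Matrix.one_mulVec]
        refine lt_of_le_of_ne (hdnn v) fun h => hv ?_
        exact (dotProduct_self_eq_zero).1 h.symm
      exact Finset.sum_pos' (fun l _ => hdnn _) ⟨L - 1, hmem, h1⟩
  have hdet : IsUnit S.det := by
    exact isUnit_iff_ne_zero.2 (ne_of_gt hpos.det_pos)
  have hunit : IsUnit S := (Matrix.isUnit_iff_isUnit_det S).2 hdet
  -- (ii) r = S ε
  have hkey : y - P 0 *ᵥ x = S *ᵥ ε := by
    have hterm : ∀ l ∈ Finset.Icc 1 (L - 1),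
        (P l * (P l)ᵀ) *ᵥ ε = P l *ᵥ a (l + 1) - P (l - 1) *ᵥ a l := by
      intro l hl
      rw [Finset.mem_Icc] at hl
      have h1 := heq l hl.1 hl.2
      have hl1 : l - 1 + 1 = l := by omega
      have hPl := hP (l - 1) (by omega)
      rw [hl1] at hPl
      rw [← Matrix.mulVec_mulVec, ← h1, Matrix.mulVec_sub, Matrix.mulVec_mulVec, ← hPl]
    rw [hsumMV, Finset.sum_congr rfl hterm]
    have hIcc : Finset.Icc 1 (L - 1) = Finset.Ico 1 (L - 1 + 1) := (Finset.Ico_add_one_right_eq_Icc ..).symm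
    rw [hIcc, Finset.sum_Ico_eq_sum_range]
    have hr : L - 1 + 1 - 1 = L - 1 := by omega
    rw [hr]
    have hcongr : ∀ i ∈ Finset.range (L - 1),
        P (1 + i) *ᵥ a (1 + i + 1) - P (1 + i - 1) *ᵥ a (1 + i)
          = (fun m => P m *ᵥ a (m + 1)) (i + 1) - (fun m => P m *ᵥ a (m + 1)) i := by
      intro i _
      have e1 : 1 + i = i + 1 := by omega
      have e2 : i + 1 - 1 = i := by omega
      rw [e1, e2]
    rw [Finset.sum_congr rfl hcongr, Finset.sum_range_sub (fun m => P m *ᵥ a (m + 1)) (L - 1)]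
    have eL : L - 1 + 1 = L := by omega
    simp only [eL, hPtop, Matrix.one_mulVec, haL, ha1, zero_add]
  have hinv : ε = S⁻¹ *ᵥ (y - P 0 *ᵥ x) := by
    rw [hkey, Matrix.mulVec_mulVec, Matrix.nonsing_inv_mul S hdet, Matrix.one_mulVec]
  refine ⟨⟨hsymm, hpos, hunit⟩, ⟨hkey, hinv⟩, ?_⟩
  -- (iii)
  have hE : ∑ l ∈ Finset.Icc 1 (L - 1), (1 / 2 : ℝ) *
      ((a (l + 1) - (1 + W l) *ᵥ a l) ⬝ᵥ (a (l + 1) - (1 + W l) *ᵥ a l))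
      = (1 / 2 : ℝ) * (ε ⬝ᵥ (S *ᵥ ε)) := by
    rw [hquad ε, Finset.mul_sum]
    refine Finset.sum_congr rfl fun l hl => ?_
    rw [Finset.mem_Icc] at hl
    rw [heq l hl.1 hl.2]
  rw [hE, ← hinv, ← hkey, dotProduct_comm]
end
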